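/- Let A and B be nonnegative n×n matrices. Then ‖A^(1/3) ∘ (Bᵀ)^(1/3) ∘ A^(1/3)‖ ≤ r((AᵀBᵀ)^(1/3) ∘ (AᵀA)^(1/3) ∘ (BA)^(1/3))^{1/2} ≤ ‖ABA‖^{1/3}, where ‖·‖ is the ℓ²-operator norm, r the spectral radius, ∘ the Hadamard product and X^(1/3) the entrywise cube root. -/

import Mathlib

open scoped ENNReal
open Finset Matrix
noncomputable def specRad {n : ℕ} (A : Matrix (Fin n) (Fin n) ℝ) : ℝ≥0∞ :=
  spectralRadius ℂ (A.map (algebraMap ℝ ℂ))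
noncomputable def opNorm {n : ℕ} (A : Matrix (Fin n) (Fin n) ℝ) : ℝ :=
  ‖Matrix.toEuclideanCLM (𝕜 := ℝ) A‖

namespace Stmt19Aux

open scoped Matrix.Norms.L2Operator Topology NNReal
open Filter

noncomputable instance {n : ℕ} : CompleteSpace (Matrix (Fin n) (Fin n) ℂ) :=
  FiniteDimensional.complete ℂ _

noncomputable instance {n : ℕ} : CStarAlgebra (Matrix (Fin n) (Fin n) ℂ) := Matrix.instCStarAlgebra

variable {n : ℕ}

/-- entrywise complexification -/
noncomputable def cmap (M : Matrix (Fin n) (Fin n) ℝ) : Matrix (Fin n) (Fin n) ℂ :=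
  M.map (algebraMap ℝ ℂ)

lemma cmap_apply (M : Matrix (Fin n) (Fin n) ℝ) (i j : Fin n) :
    cmap M i j = (M i j : ℂ) := rfl

lemma cmap_mul (M N : Matrix (Fin n) (Fin n) ℝ) : cmap (M * N) = cmap M * cmap N :=
  Matrix.map_mul

lemma cmap_pow (M : Matrix (Fin n) (Fin n) ℝ) (k : ℕ) : cmap (M ^ k) = cmap M ^ k := by
  simpa [RingHom.mapMatrix_apply, cmap] using map_pow (RingHom.mapMatrix (algebraMap ℝ ℂ)) M k

lemma cmap_conjTranspose (M : Matrix (Fin n) (Fin n) ℝ) : (cmap M)ᴴ = cmap Mᵀ := by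
  ext i j
  simp [cmap, Matrix.conjTranspose_apply, Complex.conj_ofReal]

lemma clm_apply_coord {𝕜 : Type*} [RCLike 𝕜] (M : Matrix (Fin n) (Fin n) 𝕜)
    (x : EuclideanSpace 𝕜 (Fin n)) (i : Fin n) :
    (Matrix.toEuclideanCLM (𝕜 := 𝕜) M x) i = ∑ j, M i j * x j := by
  have h := congrFun (Matrix.ofLp_toEuclideanCLM (𝕜 := 𝕜) M x) i
  simpa [Matrix.toLin'_apply, Matrix.mulVec, dotProduct] using h

lemma eucl_coord_le_norm {𝕜 : Type*} [RCLike 𝕜] (x : EuclideanSpace 𝕜 (Fin n)) (i : Fin n) :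
    ‖x i‖ ≤ ‖x‖ := by
  rw [EuclideanSpace.norm_eq]
  have : ‖x i‖ ^ 2 ≤ ∑ j, ‖x j‖ ^ 2 :=
    Finset.single_le_sum (f := fun j => ‖x j‖ ^ 2) (fun j _ => by positivity) (mem_univ i)
  nlinarith [Real.sq_sqrt (show (0:ℝ) ≤ ∑ j, ‖x j‖ ^ 2 by positivity),
    Real.sqrt_nonneg (∑ j, ‖x j‖ ^ 2), norm_nonneg (x i)]

lemma eucl_norm_le_norm {𝕜 𝕜' : Type*} [RCLike 𝕜] [RCLike 𝕜']
    {x : EuclideanSpace 𝕜 (Fin n)} {y : EuclideanSpace 𝕜' (Fin n)}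
    (h : ∀ i, ‖x i‖ ≤ ‖y i‖) : ‖x‖ ≤ ‖y‖ := by
  rw [EuclideanSpace.norm_eq, EuclideanSpace.norm_eq]
  exact Real.sqrt_le_sqrt (Finset.sum_le_sum fun i _ =>
    pow_le_pow_left₀ (norm_nonneg _) (h i) 2)

/-- entry bounded by L2 operator norm -/
lemma entry_le_norm (M : Matrix (Fin n) (Fin n) ℝ) (i j : Fin n) : |M i j| ≤ ‖cmap M‖ := by
  have hx : ‖EuclideanSpace.single j (1:ℂ)‖ = 1 := by simp [EuclideanSpace.norm_single]
  have h1 : (Matrix.toEuclideanCLM (𝕜 := ℂ) (cmap M) (EuclideanSpace.single j (1:ℂ))) i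
      = (M i j : ℂ) := by
    rw [clm_apply_coord]
    simp [EuclideanSpace.single_apply, cmap_apply]
  have h2 : ‖(Matrix.toEuclideanCLM (𝕜 := ℂ) (cmap M) (EuclideanSpace.single j (1:ℂ))) i‖
      ≤ ‖cmap M‖ := by
    refine (eucl_coord_le_norm _ i).trans ?_
    calc ‖Matrix.toEuclideanCLM (𝕜 := ℂ) (cmap M) (EuclideanSpace.single j (1:ℂ))‖
        ≤ ‖Matrix.toEuclideanCLM (𝕜 := ℂ) (cmap M)‖ * ‖EuclideanSpace.single j (1:ℂ)‖ :=
          ContinuousLinearMap.le_opNorm _ _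
      _ = ‖cmap M‖ := by rw [hx, mul_one]; rfl
  rw [h1] at h2
  simpa [Complex.norm_real] using h2

lemma sum_norm_le_sqrt (z : EuclideanSpace ℂ (Fin n)) : ∑ j, ‖z j‖ ≤ Real.sqrt n * ‖z‖ := by
  have h := Finset.sum_mul_sq_le_sq_mul_sq Finset.univ (fun _ => (1:ℝ)) (fun j => ‖z j‖)
  rw [EuclideanSpace.norm_eq]
  have h1 : (∑ j : Fin n, ‖z j‖) ^ 2 ≤ n * ∑ j, ‖z j‖ ^ 2 := by simpa using h
  nlinarith [Real.sq_sqrt (show (0:ℝ) ≤ (n:ℝ) by positivity),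
    Real.sq_sqrt (show (0:ℝ) ≤ ∑ j, ‖z j‖ ^ 2 by positivity),
    Real.sqrt_nonneg (n:ℝ), Real.sqrt_nonneg (∑ j, ‖z j‖ ^ 2),
    Finset.sum_nonneg (fun j (_ : j ∈ Finset.univ) => norm_nonneg (z j)),
    mul_nonneg (Real.sqrt_nonneg (n:ℝ)) (Real.sqrt_nonneg (∑ j, ‖z j‖ ^ 2))]

/-- monotonicity of the L2 operator norm in nonnegative entries -/
lemma norm_cmap_mono {M N : Matrix (Fin n) (Fin n) ℝ} (h : ∀ i j, |M i j| ≤ N i j) :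
    ‖cmap M‖ ≤ ‖cmap N‖ := by
  show ‖Matrix.toEuclideanCLM (𝕜 := ℂ) (cmap M)‖ ≤ ‖cmap N‖
  refine ContinuousLinearMap.opNorm_le_bound _ (norm_nonneg _) fun z => ?_
  set y : EuclideanSpace ℂ (Fin n) := (WithLp.equiv 2 (Fin n → ℂ)).symm fun i => (‖z i‖ : ℂ)
    with hy
  have hyc : ∀ i, y i = (‖z i‖ : ℂ) := fun i => rfl
  have hznorm : ‖y‖ = ‖z‖ := by
    rw [EuclideanSpace.norm_eq, EuclideanSpace.norm_eq]
    congr 1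
    refine Finset.sum_congr rfl fun i _ => ?_
    rw [hyc]
    simp [Complex.norm_real]
  have key : ∀ i, ‖(Matrix.toEuclideanCLM (𝕜 := ℂ) (cmap M) z) i‖
      ≤ ‖(Matrix.toEuclideanCLM (𝕜 := ℂ) (cmap N) y) i‖ := by
    intro i
    rw [clm_apply_coord, clm_apply_coord]
    have hNz : ∑ j, cmap N i j * y j = ((∑ j, N i j * ‖z j‖ : ℝ) : ℂ) := by
      push_cast [cmap_apply, hyc]
      rfl
    rw [hNz]
    have hnn : (0:ℝ) ≤ ∑ j, N i j * ‖z j‖ :=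
      Finset.sum_nonneg fun j _ => mul_nonneg ((abs_nonneg _).trans (h i j)) (norm_nonneg _)
    rw [Complex.norm_real, Real.norm_eq_abs, abs_of_nonneg hnn]
    calc ‖∑ j, cmap M i j * z j‖ ≤ ∑ j, ‖cmap M i j * z j‖ := norm_sum_le _ _
      _ ≤ ∑ j, N i j * ‖z j‖ := by
          refine Finset.sum_le_sum fun j _ => ?_
          rw [norm_mul, cmap_apply, Complex.norm_real, Real.norm_eq_abs]
          exact mul_le_mul_of_nonneg_right (h i j) (norm_nonneg _)
  calc ‖Matrix.toEuclideanCLM (𝕜 := ℂ) (cmap M) z‖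
      ≤ ‖Matrix.toEuclideanCLM (𝕜 := ℂ) (cmap N) y‖ := eucl_norm_le_norm key
    _ ≤ ‖Matrix.toEuclideanCLM (𝕜 := ℂ) (cmap N)‖ * ‖y‖ := ContinuousLinearMap.le_opNorm _ _
    _ = ‖cmap N‖ * ‖z‖ := by rw [hznorm]; rfl

/-- uniform entry bound gives norm bound -/
lemma norm_cmap_le_card_mul {M : Matrix (Fin n) (Fin n) ℝ} {c : ℝ} (hc : 0 ≤ c)
    (h : ∀ i j, |M i j| ≤ c) : ‖cmap M‖ ≤ n * c := by
  show ‖Matrix.toEuclideanCLM (𝕜 := ℂ) (cmap M)‖ ≤ (n : ℝ) * c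
  refine ContinuousLinearMap.opNorm_le_bound _ (by positivity) fun z => ?_
  have key : ∀ i, ‖(Matrix.toEuclideanCLM (𝕜 := ℂ) (cmap M) z) i‖
      ≤ c * (Real.sqrt n * ‖z‖) := by
    intro i
    rw [clm_apply_coord]
    calc ‖∑ j, cmap M i j * z j‖ ≤ ∑ j, ‖cmap M i j * z j‖ := norm_sum_le _ _
      _ ≤ ∑ j, c * ‖z j‖ := by
          refine Finset.sum_le_sum fun j _ => ?_
          rw [norm_mul, cmap_apply, Complex.norm_real, Real.norm_eq_abs]
          exact mul_le_mul_of_nonneg_right (h i j) (norm_nonneg _)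
      _ = c * ∑ j, ‖z j‖ := by rw [Finset.mul_sum]
      _ ≤ c * (Real.sqrt n * ‖z‖) :=
          mul_le_mul_of_nonneg_left (sum_norm_le_sqrt z) hc
  have h2 : ‖Matrix.toEuclideanCLM (𝕜 := ℂ) (cmap M) z‖
      ≤ Real.sqrt n * (c * (Real.sqrt n * ‖z‖)) := by
    rw [EuclideanSpace.norm_eq]
    have hb : (0:ℝ) ≤ c * (Real.sqrt n * ‖z‖) := by positivity
    calc Real.sqrt (∑ i, ‖(Matrix.toEuclideanCLM (𝕜 := ℂ) (cmap M) z) i‖ ^ 2)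
        ≤ Real.sqrt (∑ _i : Fin n, (c * (Real.sqrt n * ‖z‖)) ^ 2) :=
          Real.sqrt_le_sqrt (Finset.sum_le_sum fun i _ =>
            pow_le_pow_left₀ (norm_nonneg _) (key i) 2)
      _ = Real.sqrt (n * (c * (Real.sqrt n * ‖z‖)) ^ 2) := by
          rw [Finset.sum_const, card_univ, Fintype.card_fin, nsmul_eq_mul]
      _ = Real.sqrt n * (c * (Real.sqrt n * ‖z‖)) := by
          rw [Real.sqrt_mul (by positivity), Real.sqrt_sq hb]
  calc ‖Matrix.toEuclideanCLM (𝕜 := ℂ) (cmap M) z‖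
      ≤ Real.sqrt n * (c * (Real.sqrt n * ‖z‖)) := h2
    _ = (Real.sqrt n * Real.sqrt n) * c * ‖z‖ := by ring
    _ = (n : ℝ) * c * ‖z‖ := by rw [Real.mul_self_sqrt (by positivity)]
    _ = (n : ℝ) * c * ‖z‖ := rfl

/-- the complex operator norm of a real matrix agrees with the real operator norm -/
lemma norm_cmap_eq (M : Matrix (Fin n) (Fin n) ℝ) :
    ‖cmap M‖ = ‖Matrix.toEuclideanCLM (𝕜 := ℝ) M‖ := by
  set T := Matrix.toEuclideanCLM (𝕜 := ℝ) M with hT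
  refine le_antisymm ?_ ?_
  · show ‖Matrix.toEuclideanCLM (𝕜 := ℂ) (cmap M)‖ ≤ ‖T‖
    refine ContinuousLinearMap.opNorm_le_bound _ (norm_nonneg _) fun z => ?_
    set u : EuclideanSpace ℝ (Fin n) := (WithLp.equiv 2 (Fin n → ℝ)).symm fun i => (z i).re
    set v : EuclideanSpace ℝ (Fin n) := (WithLp.equiv 2 (Fin n → ℝ)).symm fun i => (z i).im
    have hu : ∀ i, u i = (z i).re := fun i => rfl
    have hv : ∀ i, v i = (z i).im := fun i => rfl
    have hcoord : ∀ i, (Matrix.toEuclideanCLM (𝕜 := ℂ) (cmap M) z) i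
        = Complex.mk ((T u) i) ((T v) i) := by
      intro i
      rw [clm_apply_coord, clm_apply_coord, clm_apply_coord]
      apply Complex.ext
      · simp [Complex.re_sum, cmap_apply, hu]
      · simp [Complex.im_sum, cmap_apply, hv]
    have hsq : ‖Matrix.toEuclideanCLM (𝕜 := ℂ) (cmap M) z‖ ^ 2 = ‖T u‖ ^ 2 + ‖T v‖ ^ 2 := by
      rw [EuclideanSpace.norm_eq, EuclideanSpace.norm_eq, EuclideanSpace.norm_eq,
        Real.sq_sqrt (by positivity), Real.sq_sqrt (by positivity), Real.sq_sqrt (by positivity),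
        ← Finset.sum_add_distrib]
      refine Finset.sum_congr rfl fun i _ => ?_
      rw [hcoord i]
      rw [Complex.sq_norm, Complex.normSq_mk]
      simp [Real.norm_eq_abs, sq_abs]
      ring
    have hzsq : ‖z‖ ^ 2 = ‖u‖ ^ 2 + ‖v‖ ^ 2 := by
      rw [EuclideanSpace.norm_eq, EuclideanSpace.norm_eq, EuclideanSpace.norm_eq,
        Real.sq_sqrt (by positivity), Real.sq_sqrt (by positivity), Real.sq_sqrt (by positivity),
        ← Finset.sum_add_distrib]
      refine Finset.sum_congr rfl fun i _ => ?_
      rw [Complex.sq_norm, Complex.normSq_apply]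
      simp [hu, hv, Real.norm_eq_abs, sq_abs]
      ring
    have hub : ‖T u‖ ≤ ‖T‖ * ‖u‖ := T.le_opNorm u
    have hvb : ‖T v‖ ≤ ‖T‖ * ‖v‖ := T.le_opNorm v
    have : ‖Matrix.toEuclideanCLM (𝕜 := ℂ) (cmap M) z‖ ^ 2 ≤ (‖T‖ * ‖z‖) ^ 2 := by
      rw [hsq]
      have h1 : ‖T u‖ ^ 2 ≤ (‖T‖ * ‖u‖) ^ 2 := pow_le_pow_left₀ (norm_nonneg _) hub 2
      have h2 : ‖T v‖ ^ 2 ≤ (‖T‖ * ‖v‖) ^ 2 := pow_le_pow_left₀ (norm_nonneg _) hvb 2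
      calc ‖T u‖ ^ 2 + ‖T v‖ ^ 2 ≤ (‖T‖ * ‖u‖) ^ 2 + (‖T‖ * ‖v‖) ^ 2 := add_le_add h1 h2
        _ = ‖T‖ ^ 2 * (‖u‖ ^ 2 + ‖v‖ ^ 2) := by ring
        _ = (‖T‖ * ‖z‖) ^ 2 := by rw [← hzsq]; ring
    nlinarith [norm_nonneg (Matrix.toEuclideanCLM (𝕜 := ℂ) (cmap M) z),
      mul_nonneg (norm_nonneg T) (norm_nonneg z)]
  · refine ContinuousLinearMap.opNorm_le_bound _ (norm_nonneg _) fun x => ?_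
    set z : EuclideanSpace ℂ (Fin n) := (WithLp.equiv 2 (Fin n → ℂ)).symm fun i => (x i : ℂ)
    have hzc : ∀ i, z i = (x i : ℂ) := fun i => rfl
    have hnz : ‖z‖ = ‖x‖ := by
      rw [EuclideanSpace.norm_eq, EuclideanSpace.norm_eq]
      congr 1
      exact Finset.sum_congr rfl fun i _ => by rw [hzc]; simp [Complex.norm_real]
    have hcoord : ∀ i, ((Matrix.toEuclideanCLM (𝕜 := ℂ) (cmap M)) z) i = ((T x) i : ℂ) := by
      intro i
      rw [clm_apply_coord, clm_apply_coord]
      push_cast [cmap_apply, hzc]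
      rfl
    have : ‖T x‖ = ‖(Matrix.toEuclideanCLM (𝕜 := ℂ) (cmap M)) z‖ := by
      rw [EuclideanSpace.norm_eq, EuclideanSpace.norm_eq]
      congr 1
      exact Finset.sum_congr rfl fun i _ => by rw [hcoord i]; simp [Complex.norm_real]
    rw [this, ← hnz]
    exact ContinuousLinearMap.le_opNorm _ _

lemma nnnorm_cmap_eq (M : Matrix (Fin n) (Fin n) ℝ) :
    ‖cmap M‖₊ = ‖Matrix.toEuclideanCLM (𝕜 := ℝ) M‖₊ :=
  Subtype.ext (norm_cmap_eq M)


/-! ### Spectral radius via Gelfand's formula -/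

lemma specRad_eq (M : Matrix (Fin n) (Fin n) ℝ) :
    specRad M = spectralRadius ℂ (cmap M) := rfl

lemma gelfand (M : Matrix (Fin n) (Fin n) ℝ) :
    Tendsto (fun m : ℕ => (‖cmap (M ^ m)‖₊ : ℝ≥0∞) ^ (1 / (m : ℝ) : ℝ)) atTop
      (𝓝 (specRad M)) := by
  have h := spectrum.pow_nnnorm_pow_one_div_tendsto_nhds_spectralRadius (cmap M)
  rw [specRad_eq]
  refine h.congr fun m => ?_
  rw [cmap_pow]

lemma specRad_le_nnnorm (M : Matrix (Fin n) (Fin n) ℝ) :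
    specRad M ≤ (‖cmap M‖₊ : ℝ≥0∞) := by
  refine le_of_tendsto (gelfand M) ?_
  filter_upwards [eventually_ge_atTop 1] with m hm
  have h1 : ‖cmap (M ^ m)‖₊ ≤ ‖cmap M‖₊ ^ m := by
    rw [cmap_pow]; exact nnnorm_pow_le' _ hm
  calc (‖cmap (M ^ m)‖₊ : ℝ≥0∞) ^ (1 / (m:ℝ) : ℝ)
      ≤ ((‖cmap M‖₊ : ℝ≥0∞) ^ m) ^ (1 / (m:ℝ) : ℝ) := by
        apply ENNReal.rpow_le_rpow _ (by positivity)
        exact_mod_cast ENNReal.coe_le_coe.mpr h1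
    _ = (‖cmap M‖₊ : ℝ≥0∞) := by
        rw [← ENNReal.rpow_natCast _ m, ← ENNReal.rpow_mul]
        rw [mul_one_div, div_self (ne_of_gt (show (0:ℝ) < m by exact_mod_cast hm)),
          ENNReal.rpow_one]

lemma specRad_ne_top (M : Matrix (Fin n) (Fin n) ℝ) : specRad M ≠ ⊤ :=
  ((specRad_le_nnnorm M).trans_lt ENNReal.coe_lt_top).ne

lemma abs_pow_entry_le {M N : Matrix (Fin n) (Fin n) ℝ} (h : ∀ i j, |M i j| ≤ N i j) :
    ∀ (m : ℕ) (i j : Fin n), |(M ^ m) i j| ≤ (N ^ m) i j := by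
  intro m
  induction m with
  | zero =>
      intro i j
      simp only [pow_zero, Matrix.one_apply]
      split <;> simp
  | succ m ih =>
      intro i j
      rw [pow_succ, pow_succ, Matrix.mul_apply, Matrix.mul_apply]
      calc |∑ k, (M ^ m) i k * M k j| ≤ ∑ k, |(M ^ m) i k * M k j| :=
            Finset.abs_sum_le_sum_abs _ _
        _ ≤ ∑ k, (N ^ m) i k * N k j := by
            refine Finset.sum_le_sum fun k _ => ?_
            rw [abs_mul]
            exact mul_le_mul (ih i k) (h k j) (abs_nonneg _) ((abs_nonneg _).trans (ih i k))

lemma specRad_mono {M N : Matrix (Fin n) (Fin n) ℝ} (h : ∀ i j, |M i j| ≤ N i j) :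
    specRad M ≤ specRad N := by
  refine le_of_tendsto_of_tendsto' (gelfand M) (gelfand N) fun m => ?_
  apply ENNReal.rpow_le_rpow _ (by positivity)
  exact_mod_cast ENNReal.coe_le_coe.mpr
    (by exact_mod_cast norm_cmap_mono (abs_pow_entry_le h m))

lemma tendsto_rpow_one_div {c : ℝ≥0∞} (hc0 : c ≠ 0) (hct : c ≠ ⊤) :
    Tendsto (fun m : ℕ => c ^ (1 / (m : ℝ) : ℝ)) atTop (𝓝 1) := by
  lift c to ℝ≥0 using hct
  have hc0' : c ≠ 0 := by exact_mod_cast hc0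
  have hreal : Tendsto (fun m : ℕ => (c : ℝ) ^ (1 / (m : ℝ) : ℝ)) atTop (𝓝 1) := by
    have h0 : Tendsto (fun m : ℕ => 1 / (m : ℝ)) atTop (𝓝 0) :=
      tendsto_one_div_atTop_nhds_zero_nat
    have hconst : Tendsto (fun _ : ℕ => (c : ℝ)) atTop (𝓝 (c : ℝ)) := tendsto_const_nhds
    have hne : (c : ℝ) ≠ 0 := by exact_mod_cast hc0'
    have := Filter.Tendsto.rpow hconst h0 (Or.inl hne)
    simpa [Real.rpow_zero] using this
  have hnn : Tendsto (fun m : ℕ => c ^ (1 / (m : ℝ) : ℝ)) atTop (𝓝 (1 : ℝ≥0)) := by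
    rw [← NNReal.tendsto_coe]
    simpa [NNReal.coe_rpow] using hreal
  have := (ENNReal.tendsto_coe (f := atTop)).mpr hnn
  simp only [ENNReal.coe_one] at this
  refine this.congr fun m => ?_
  rw [ENNReal.coe_rpow_of_ne_zero hc0']

lemma specRad_pow (M : Matrix (Fin n) (Fin n) ℝ) {k : ℕ} (hk : 0 < k) :
    specRad (M ^ k) = specRad M ^ k := by
  have hsub : Tendsto (fun m : ℕ => k * m) atTop atTop :=
    tendsto_atTop_atTop_of_monotone (fun a b h => Nat.mul_le_mul_left k h)
      (fun b => ⟨b, Nat.le_mul_of_pos_left b hk⟩)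
  have h1 := (gelfand M).comp hsub
  have hc : Continuous fun x : ℝ≥0∞ => x ^ k := ENNReal.continuous_pow k
  have h2 := ((hc.tendsto _).comp h1 : Tendsto _ atTop (𝓝 (specRad M ^ k)))
  refine tendsto_nhds_unique ?_ h2
  refine (gelfand (M ^ k)).congr' ?_
  filter_upwards [eventually_ge_atTop 1] with m hm
  have hem : ((k * m : ℕ) : ℝ) ≠ 0 := by positivity
  simp only [Function.comp_apply]
  rw [← pow_mul, ← ENNReal.rpow_natCast _ k, ← ENNReal.rpow_mul]
  congr 1
  · push_cast
    field_simp


/-! ### Hölder inequality for three functions -/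


lemma holder3 {ι : Type*} (s : Finset ι) (f g h : ι → ℝ)
    (hf : ∀ i ∈ s, 0 ≤ f i) (hg : ∀ i ∈ s, 0 ≤ g i) (hh : ∀ i ∈ s, 0 ≤ h i) :
    ∑ i ∈ s, (f i) ^ ((1:ℝ)/3) * (g i) ^ ((1:ℝ)/3) * (h i) ^ ((1:ℝ)/3) ≤
      (∑ i ∈ s, f i) ^ ((1:ℝ)/3) * (∑ i ∈ s, g i) ^ ((1:ℝ)/3) *
        (∑ i ∈ s, h i) ^ ((1:ℝ)/3) := by
  have hpq : (3:ℝ).HolderConjugate (3/2) := ⟨by norm_num, by norm_num, by norm_num⟩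
  have h2 : (2:ℝ).HolderConjugate 2 := ⟨by norm_num, by norm_num, by norm_num⟩
  have step1 := Real.inner_le_Lp_mul_Lq_of_nonneg s hpq
    (f := fun i => (f i) ^ ((1:ℝ)/3)) (g := fun i => (g i) ^ ((1:ℝ)/3) * (h i) ^ ((1:ℝ)/3))
    (fun i hi => Real.rpow_nonneg (hf i hi) _)
    (fun i hi => mul_nonneg (Real.rpow_nonneg (hg i hi) _) (Real.rpow_nonneg (hh i hi) _))
  have e1 : ∑ i ∈ s, ((f i) ^ ((1:ℝ)/3)) ^ (3:ℝ) = ∑ i ∈ s, f i := by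
    refine Finset.sum_congr rfl fun i hi => ?_
    rw [← Real.rpow_mul (hf i hi)]; norm_num
  have e2 : ∑ i ∈ s, ((g i) ^ ((1:ℝ)/3) * (h i) ^ ((1:ℝ)/3)) ^ (3/2:ℝ)
      = ∑ i ∈ s, (g i) ^ ((1:ℝ)/2) * (h i) ^ ((1:ℝ)/2) := by
    refine Finset.sum_congr rfl fun i hi => ?_
    rw [Real.mul_rpow (Real.rpow_nonneg (hg i hi) _) (Real.rpow_nonneg (hh i hi) _),
      ← Real.rpow_mul (hg i hi), ← Real.rpow_mul (hh i hi)]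
    norm_num
  have step2 := Real.inner_le_Lp_mul_Lq_of_nonneg s h2
    (f := fun i => (g i) ^ ((1:ℝ)/2)) (g := fun i => (h i) ^ ((1:ℝ)/2))
    (fun i hi => Real.rpow_nonneg (hg i hi) _) (fun i hi => Real.rpow_nonneg (hh i hi) _)
  have e3 : ∑ i ∈ s, ((g i) ^ ((1:ℝ)/2)) ^ (2:ℝ) = ∑ i ∈ s, g i := by
    refine Finset.sum_congr rfl fun i hi => ?_
    rw [← Real.rpow_mul (hg i hi)]; norm_num
  have e4 : ∑ i ∈ s, ((h i) ^ ((1:ℝ)/2)) ^ (2:ℝ) = ∑ i ∈ s, h i := by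
    refine Finset.sum_congr rfl fun i hi => ?_
    rw [← Real.rpow_mul (hh i hi)]; norm_num
  rw [e1] at step1
  rw [e2] at step1
  rw [e3, e4] at step2
  have hsg : (0:ℝ) ≤ ∑ i ∈ s, g i := Finset.sum_nonneg hg
  have hsh : (0:ℝ) ≤ ∑ i ∈ s, h i := Finset.sum_nonneg hh
  have hsf : (0:ℝ) ≤ ∑ i ∈ s, f i := Finset.sum_nonneg hf
  calc ∑ i ∈ s, (f i) ^ ((1:ℝ)/3) * (g i) ^ ((1:ℝ)/3) * (h i) ^ ((1:ℝ)/3)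
      = ∑ i ∈ s, (f i) ^ ((1:ℝ)/3) * ((g i) ^ ((1:ℝ)/3) * (h i) ^ ((1:ℝ)/3)) := by
        refine Finset.sum_congr rfl fun i hi => by ring
    _ ≤ (∑ i ∈ s, f i) ^ (1/(3:ℝ)) *
          (∑ i ∈ s, (g i) ^ ((1:ℝ)/2) * (h i) ^ ((1:ℝ)/2)) ^ (1/(3/2:ℝ)) := step1
    _ ≤ (∑ i ∈ s, f i) ^ (1/(3:ℝ)) *
          ((∑ i ∈ s, g i) ^ (1/(2:ℝ)) * (∑ i ∈ s, h i) ^ (1/(2:ℝ))) ^ (1/(3/2:ℝ)) := by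
        refine mul_le_mul_of_nonneg_left ?_ (Real.rpow_nonneg hsf _)
        refine Real.rpow_le_rpow (Finset.sum_nonneg fun i hi =>
          mul_nonneg (Real.rpow_nonneg (hg i hi) _) (Real.rpow_nonneg (hh i hi) _)) step2 (by norm_num)
    _ = (∑ i ∈ s, f i) ^ ((1:ℝ)/3) * (∑ i ∈ s, g i) ^ ((1:ℝ)/3) *
        (∑ i ∈ s, h i) ^ ((1:ℝ)/3) := by
        rw [Real.mul_rpow (Real.rpow_nonneg hsg _) (Real.rpow_nonneg hsh _),
          ← Real.rpow_mul hsg, ← Real.rpow_mul hsh]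
        norm_num
        ring

/-! ### Hadamard cube-root products -/

lemma pow_entry_nonneg {P : Matrix (Fin n) (Fin n) ℝ} (hP : ∀ i j, 0 ≤ P i j) (m : ℕ) :
    ∀ i j, 0 ≤ (P ^ m) i j := by
  induction m with
  | zero =>
      intro i j
      rw [pow_zero, Matrix.one_apply]
      split <;> norm_num
  | succ m ih =>
      intro i j
      rw [pow_succ, Matrix.mul_apply]
      exact Finset.sum_nonneg fun k _ => mul_nonneg (ih i k) (hP k j)

/-- entrywise cube-root Hadamard product of three matrices -/
noncomputable def hroot (P Q R : Matrix (Fin n) (Fin n) ℝ) : Matrix (Fin n) (Fin n) ℝ :=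
  Matrix.of fun i j => (P i j) ^ ((1:ℝ)/3) * (Q i j) ^ ((1:ℝ)/3) * (R i j) ^ ((1:ℝ)/3)

lemma hroot_apply (P Q R : Matrix (Fin n) (Fin n) ℝ) (i j : Fin n) :
    hroot P Q R i j = (P i j) ^ ((1:ℝ)/3) * (Q i j) ^ ((1:ℝ)/3) * (R i j) ^ ((1:ℝ)/3) := rfl

lemma hroot_nonneg {P Q R : Matrix (Fin n) (Fin n) ℝ} (hP : ∀ i j, 0 ≤ P i j)
    (hQ : ∀ i j, 0 ≤ Q i j) (hR : ∀ i j, 0 ≤ R i j) (i j : Fin n) :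
    0 ≤ hroot P Q R i j :=
  mul_nonneg (mul_nonneg (Real.rpow_nonneg (hP i j) _) (Real.rpow_nonneg (hQ i j) _))
    (Real.rpow_nonneg (hR i j) _)

lemma hroot_pow_le {P Q R : Matrix (Fin n) (Fin n) ℝ} (hP : ∀ i j, 0 ≤ P i j)
    (hQ : ∀ i j, 0 ≤ Q i j) (hR : ∀ i j, 0 ≤ R i j) (m : ℕ) :
    ∀ i j, ((hroot P Q R) ^ m) i j ≤
      ((P ^ m) i j) ^ ((1:ℝ)/3) * ((Q ^ m) i j) ^ ((1:ℝ)/3) * ((R ^ m) i j) ^ ((1:ℝ)/3) := by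
  induction m with
  | zero =>
      intro i j
      simp only [pow_zero, Matrix.one_apply]
      rcases eq_or_ne i j with rfl | hij
      · simp
      · simp [hij, Real.zero_rpow (by norm_num : (1:ℝ)/3 ≠ 0)]
  | succ m ih =>
      intro i j
      have hDnn := pow_entry_nonneg (hroot_nonneg hP hQ hR) m
      rw [pow_succ, Matrix.mul_apply]
      have step1 : ∑ k, ((hroot P Q R) ^ m) i k * (hroot P Q R) k j ≤
          ∑ k, ((P ^ m) i k * P k j) ^ ((1:ℝ)/3) * ((Q ^ m) i k * Q k j) ^ ((1:ℝ)/3) *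
            ((R ^ m) i k * R k j) ^ ((1:ℝ)/3) := by
        refine Finset.sum_le_sum fun k _ => ?_
        have expand : ((P ^ m) i k * P k j) ^ ((1:ℝ)/3) * ((Q ^ m) i k * Q k j) ^ ((1:ℝ)/3) *
            ((R ^ m) i k * R k j) ^ ((1:ℝ)/3) =
            (((P ^ m) i k) ^ ((1:ℝ)/3) * ((Q ^ m) i k) ^ ((1:ℝ)/3) *
              ((R ^ m) i k) ^ ((1:ℝ)/3)) * hroot P Q R k j := by
          rw [hroot_apply, Real.mul_rpow (pow_entry_nonneg hP m i k) (hP k j),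
            Real.mul_rpow (pow_entry_nonneg hQ m i k) (hQ k j),
            Real.mul_rpow (pow_entry_nonneg hR m i k) (hR k j)]
          ring
        rw [expand]
        exact mul_le_mul_of_nonneg_right (ih i k) (hroot_nonneg hP hQ hR k j)
      refine step1.trans ?_
      have step2 := holder3 Finset.univ (fun k => (P ^ m) i k * P k j)
        (fun k => (Q ^ m) i k * Q k j) (fun k => (R ^ m) i k * R k j)
        (fun k _ => mul_nonneg (pow_entry_nonneg hP m i k) (hP k j))
        (fun k _ => mul_nonneg (pow_entry_nonneg hQ m i k) (hQ k j))
        (fun k _ => mul_nonneg (pow_entry_nonneg hR m i k) (hR k j))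
      refine step2.trans (le_of_eq ?_)
      rw [pow_succ, pow_succ, pow_succ, Matrix.mul_apply, Matrix.mul_apply, Matrix.mul_apply]

lemma rpow_swap (a : ℝ≥0∞) (s t : ℝ) : (a ^ s) ^ t = (a ^ t) ^ s := by
  rw [← ENNReal.rpow_mul, mul_comm, ENNReal.rpow_mul]

/-- (Elsner–Johnson–Dias da Silva style bound) -/
lemma specRad_hroot_le {P Q R : Matrix (Fin n) (Fin n) ℝ} (hP : ∀ i j, 0 ≤ P i j)
    (hQ : ∀ i j, 0 ≤ Q i j) (hR : ∀ i j, 0 ≤ R i j) :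
    specRad (hroot P Q R) ≤
      specRad P ^ ((1:ℝ)/3) * specRad Q ^ ((1:ℝ)/3) * specRad R ^ ((1:ℝ)/3) := by
  set cn : ℝ≥0∞ := (n : ℝ≥0∞) + 1 with hcn
  have hcn0 : cn ≠ 0 := by simp [hcn]
  have hcnt : cn ≠ ⊤ := by simp [hcn, ENNReal.add_ne_top]
  -- the comparison sequence
  set G : ℕ → ℝ≥0∞ := fun m =>
    cn ^ (1 / (m:ℝ) : ℝ) *
      ((‖cmap (P ^ m)‖₊ : ℝ≥0∞) ^ (1 / (m:ℝ) : ℝ)) ^ ((1:ℝ)/3) *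
      ((‖cmap (Q ^ m)‖₊ : ℝ≥0∞) ^ (1 / (m:ℝ) : ℝ)) ^ ((1:ℝ)/3) *
      ((‖cmap (R ^ m)‖₊ : ℝ≥0∞) ^ (1 / (m:ℝ) : ℝ)) ^ ((1:ℝ)/3) with hG
  have hPt : specRad P ^ ((1:ℝ)/3) ≠ ⊤ :=
    ENNReal.rpow_ne_top_of_nonneg (by norm_num) (specRad_ne_top P)
  have hQt : specRad Q ^ ((1:ℝ)/3) ≠ ⊤ :=
    ENNReal.rpow_ne_top_of_nonneg (by norm_num) (specRad_ne_top Q)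
  have hRt : specRad R ^ ((1:ℝ)/3) ≠ ⊤ :=
    ENNReal.rpow_ne_top_of_nonneg (by norm_num) (specRad_ne_top R)
  have hGlim : Tendsto G atTop
      (𝓝 (1 * specRad P ^ ((1:ℝ)/3) * specRad Q ^ ((1:ℝ)/3) * specRad R ^ ((1:ℝ)/3))) := by
    have t0 : Tendsto (fun m : ℕ => cn ^ (1 / (m:ℝ) : ℝ)) atTop (𝓝 1) :=
      tendsto_rpow_one_div hcn0 hcnt
    have tP : Tendsto (fun m : ℕ => ((‖cmap (P ^ m)‖₊ : ℝ≥0∞) ^ (1 / (m:ℝ) : ℝ)) ^ ((1:ℝ)/3))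
        atTop (𝓝 (specRad P ^ ((1:ℝ)/3))) :=
      ((ENNReal.continuous_rpow_const (y := ((1:ℝ)/3))).tendsto _).comp (gelfand P)
    have tQ : Tendsto (fun m : ℕ => ((‖cmap (Q ^ m)‖₊ : ℝ≥0∞) ^ (1 / (m:ℝ) : ℝ)) ^ ((1:ℝ)/3))
        atTop (𝓝 (specRad Q ^ ((1:ℝ)/3))) :=
      ((ENNReal.continuous_rpow_const (y := ((1:ℝ)/3))).tendsto _).comp (gelfand Q)
    have tR : Tendsto (fun m : ℕ => ((‖cmap (R ^ m)‖₊ : ℝ≥0∞) ^ (1 / (m:ℝ) : ℝ)) ^ ((1:ℝ)/3))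
        atTop (𝓝 (specRad R ^ ((1:ℝ)/3))) :=
      ((ENNReal.continuous_rpow_const (y := ((1:ℝ)/3))).tendsto _).comp (gelfand R)
    have t1 := ENNReal.Tendsto.mul t0 (Or.inr hPt) tP (Or.inr ENNReal.one_ne_top)
    have t2 := ENNReal.Tendsto.mul t1 (Or.inr hQt) tQ
      (Or.inr (by exact ENNReal.mul_ne_top ENNReal.one_ne_top hPt))
    exact ENNReal.Tendsto.mul t2 (Or.inr hRt) tR
      (Or.inr (ENNReal.mul_ne_top (ENNReal.mul_ne_top ENNReal.one_ne_top hPt) hQt))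
  rw [one_mul] at hGlim
  refine le_of_tendsto_of_tendsto' (gelfand (hroot P Q R)) hGlim fun m => ?_
  -- pointwise bound
  have hreal : ‖cmap ((hroot P Q R) ^ m)‖ ≤ (n : ℝ) *
      (‖cmap (P ^ m)‖ ^ ((1:ℝ)/3) * ‖cmap (Q ^ m)‖ ^ ((1:ℝ)/3) *
        ‖cmap (R ^ m)‖ ^ ((1:ℝ)/3)) := by
    refine norm_cmap_le_card_mul (by positivity) fun i j => ?_
    rw [abs_of_nonneg (pow_entry_nonneg (hroot_nonneg hP hQ hR) m i j)]
    refine (hroot_pow_le hP hQ hR m i j).trans ?_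
    have b1 : ((P ^ m) i j) ^ ((1:ℝ)/3) ≤ ‖cmap (P ^ m)‖ ^ ((1:ℝ)/3) :=
      Real.rpow_le_rpow (pow_entry_nonneg hP m i j)
        ((le_abs_self _).trans (entry_le_norm _ i j)) (by norm_num)
    have b2 : ((Q ^ m) i j) ^ ((1:ℝ)/3) ≤ ‖cmap (Q ^ m)‖ ^ ((1:ℝ)/3) :=
      Real.rpow_le_rpow (pow_entry_nonneg hQ m i j)
        ((le_abs_self _).trans (entry_le_norm _ i j)) (by norm_num)
    have b3 : ((R ^ m) i j) ^ ((1:ℝ)/3) ≤ ‖cmap (R ^ m)‖ ^ ((1:ℝ)/3) :=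
      Real.rpow_le_rpow (pow_entry_nonneg hR m i j)
        ((le_abs_self _).trans (entry_le_norm _ i j)) (by norm_num)
    have n1 : (0:ℝ) ≤ ((P ^ m) i j) ^ ((1:ℝ)/3) := Real.rpow_nonneg (pow_entry_nonneg hP m i j) _
    have n2 : (0:ℝ) ≤ ((Q ^ m) i j) ^ ((1:ℝ)/3) := Real.rpow_nonneg (pow_entry_nonneg hQ m i j) _
    have n3 : (0:ℝ) ≤ ((R ^ m) i j) ^ ((1:ℝ)/3) := Real.rpow_nonneg (pow_entry_nonneg hR m i j) _
    have m1 : (0:ℝ) ≤ ‖cmap (P ^ m)‖ ^ ((1:ℝ)/3) := Real.rpow_nonneg (norm_nonneg _) _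
    have m2 : (0:ℝ) ≤ ‖cmap (Q ^ m)‖ ^ ((1:ℝ)/3) := Real.rpow_nonneg (norm_nonneg _) _
    exact mul_le_mul (mul_le_mul b1 b2 n2 m1) b3 n3 (mul_nonneg m1 m2)
  -- pass to ℝ≥0∞
  have henn : (‖cmap ((hroot P Q R) ^ m)‖₊ : ℝ≥0∞) ≤
      cn * ((‖cmap (P ^ m)‖₊ : ℝ≥0∞) ^ ((1:ℝ)/3) * (‖cmap (Q ^ m)‖₊ : ℝ≥0∞) ^ ((1:ℝ)/3) *
        (‖cmap (R ^ m)‖₊ : ℝ≥0∞) ^ ((1:ℝ)/3)) := by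
    have h1 := ENNReal.ofReal_le_ofReal hreal
    rw [ofReal_norm, enorm_eq_nnnorm] at h1
    refine h1.trans ?_
    rw [ENNReal.ofReal_mul (by positivity), ENNReal.ofReal_natCast,
      ENNReal.ofReal_mul (by positivity), ENNReal.ofReal_mul (by positivity),
      ← ENNReal.ofReal_rpow_of_nonneg (norm_nonneg _) (by norm_num : (0:ℝ) ≤ 1/3),
      ← ENNReal.ofReal_rpow_of_nonneg (norm_nonneg _) (by norm_num : (0:ℝ) ≤ 1/3),
      ← ENNReal.ofReal_rpow_of_nonneg (norm_nonneg _) (by norm_num : (0:ℝ) ≤ 1/3),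
      ofReal_norm, ofReal_norm, ofReal_norm, enorm_eq_nnnorm, enorm_eq_nnnorm, enorm_eq_nnnorm]
    refine mul_le_mul_left ?_ _
    exact le_trans (le_self_add) (le_of_eq rfl)
  calc (‖cmap ((hroot P Q R) ^ m)‖₊ : ℝ≥0∞) ^ (1 / (m:ℝ) : ℝ)
      ≤ (cn * ((‖cmap (P ^ m)‖₊ : ℝ≥0∞) ^ ((1:ℝ)/3) * (‖cmap (Q ^ m)‖₊ : ℝ≥0∞) ^ ((1:ℝ)/3) *
          (‖cmap (R ^ m)‖₊ : ℝ≥0∞) ^ ((1:ℝ)/3))) ^ (1 / (m:ℝ) : ℝ) :=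
        ENNReal.rpow_le_rpow henn (by positivity)
    _ = G m := by
        rw [ENNReal.mul_rpow_of_nonneg _ _ (by positivity),
          ENNReal.mul_rpow_of_nonneg _ _ (by positivity),
          ENNReal.mul_rpow_of_nonneg _ _ (by positivity)]
        rw [rpow_swap ((‖cmap (P ^ m)‖₊ : ℝ≥0∞)) ((1:ℝ)/3) (1 / (m:ℝ)),
          rpow_swap ((‖cmap (Q ^ m)‖₊ : ℝ≥0∞)) ((1:ℝ)/3) (1 / (m:ℝ)),
          rpow_swap ((‖cmap (R ^ m)‖₊ : ℝ≥0∞)) ((1:ℝ)/3) (1 / (m:ℝ)), hG]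
        ring

lemma mul_pow_succ {M₀ : Type*} [Monoid M₀] (a b : M₀) (m : ℕ) :
    (a * b) ^ (m + 1) = a * ((b * a) ^ m * b) := by
  induction m with
  | zero => simp
  | succ m ih =>
      rw [pow_succ, ih, pow_succ]
      simp only [mul_assoc]

lemma specRad_mul_le_comm (P Q : Matrix (Fin n) (Fin n) ℝ) :
    specRad (P * Q) ≤ specRad (Q * P) := by
  by_cases hr0 : specRad (P * Q) = 0
  · simp [hr0]
  set r := specRad (P * Q) with hrdef
  have hrt : r ≠ ⊤ := specRad_ne_top _
  set c : ℝ≥0∞ := (‖cmap P‖₊ : ℝ≥0∞) * (‖cmap Q‖₊ : ℝ≥0∞) + 1 with hc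
  have hc0 : c ≠ 0 := by simp [hc]
  have hct : c ≠ ⊤ := by
    refine ENNReal.add_ne_top.mpr ⟨?_, ENNReal.one_ne_top⟩
    exact ENNReal.mul_ne_top ENNReal.coe_ne_top ENNReal.coe_ne_top
  have key : ∀ m : ℕ, r ^ (m + 1) ≤ c * (‖cmap ((Q * P) ^ m)‖₊ : ℝ≥0∞) := by
    intro m
    have h2 : (P * Q) ^ (m + 1) = P * ((Q * P) ^ m * Q) := mul_pow_succ P Q m
    calc r ^ (m + 1) = specRad ((P * Q) ^ (m + 1)) := (specRad_pow _ (Nat.succ_pos m)).symm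
      _ ≤ (‖cmap ((P * Q) ^ (m + 1))‖₊ : ℝ≥0∞) := specRad_le_nnnorm _
      _ = (‖cmap P * (cmap ((Q * P) ^ m) * cmap Q)‖₊ : ℝ≥0∞) := by
          rw [h2, cmap_mul, cmap_mul]
      _ ≤ ((‖cmap P‖₊ * (‖cmap ((Q * P) ^ m)‖₊ * ‖cmap Q‖₊) : ℝ≥0) : ℝ≥0∞) := by
          exact_mod_cast ENNReal.coe_le_coe.mpr
            ((nnnorm_mul_le _ _).trans (mul_le_mul_right (nnnorm_mul_le _ _) _))
      _ ≤ c * (‖cmap ((Q * P) ^ m)‖₊ : ℝ≥0∞) := by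
          push_cast
          calc (‖cmap P‖₊ : ℝ≥0∞) * ((‖cmap ((Q * P) ^ m)‖₊ : ℝ≥0∞) * (‖cmap Q‖₊ : ℝ≥0∞))
              = ((‖cmap P‖₊ : ℝ≥0∞) * (‖cmap Q‖₊ : ℝ≥0∞)) * (‖cmap ((Q * P) ^ m)‖₊ : ℝ≥0∞) := by
                ring
            _ ≤ c * (‖cmap ((Q * P) ^ m)‖₊ : ℝ≥0∞) :=
                mul_le_mul_left (by rw [hc]; exact le_self_add) _
  have hLHS : Tendsto (fun m : ℕ => r * r ^ (1 / (m:ℝ) : ℝ)) atTop (𝓝 (r * 1)) :=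
    ENNReal.Tendsto.const_mul (tendsto_rpow_one_div hr0 hrt) (Or.inr hrt)
  rw [mul_one] at hLHS
  have hRHS : Tendsto (fun m : ℕ => c ^ (1 / (m:ℝ) : ℝ) *
      (‖cmap ((Q * P) ^ m)‖₊ : ℝ≥0∞) ^ (1 / (m:ℝ) : ℝ)) atTop (𝓝 (1 * specRad (Q * P))) :=
    ENNReal.Tendsto.mul (tendsto_rpow_one_div hc0 hct) (Or.inr (specRad_ne_top _))
      (gelfand (Q * P)) (Or.inr ENNReal.one_ne_top)
  rw [one_mul] at hRHS
  refine le_of_tendsto_of_tendsto hLHS hRHS ?_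
  filter_upwards [eventually_ge_atTop 1] with m hm
  have hmR : (0:ℝ) < (m:ℝ) := by exact_mod_cast hm
  have hstep : r * r ^ (1 / (m:ℝ) : ℝ) = (r ^ (m + 1)) ^ (1 / (m:ℝ) : ℝ) := by
    rw [← ENNReal.rpow_natCast r (m + 1), ← ENNReal.rpow_mul]
    have hexp : ((m + 1 : ℕ) : ℝ) * (1 / (m:ℝ)) = 1 + 1 / (m:ℝ) := by
      push_cast
      field_simp
    rw [hexp, ENNReal.rpow_add _ _ hr0 hrt, ENNReal.rpow_one]
  rw [hstep]
  calc (r ^ (m + 1)) ^ (1 / (m:ℝ) : ℝ)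
      ≤ (c * (‖cmap ((Q * P) ^ m)‖₊ : ℝ≥0∞)) ^ (1 / (m:ℝ) : ℝ) :=
        ENNReal.rpow_le_rpow (key m) (by positivity)
    _ = c ^ (1 / (m:ℝ) : ℝ) * (‖cmap ((Q * P) ^ m)‖₊ : ℝ≥0∞) ^ (1 / (m:ℝ) : ℝ) :=
        ENNReal.mul_rpow_of_nonneg _ _ (by positivity)

lemma specRad_mul_comm (P Q : Matrix (Fin n) (Fin n) ℝ) :
    specRad (P * Q) = specRad (Q * P) :=
  le_antisymm (specRad_mul_le_comm P Q) (specRad_mul_le_comm Q P)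

lemma specRad_transpose_mul_self (M : Matrix (Fin n) (Fin n) ℝ) :
    specRad (Mᵀ * M) = (‖Matrix.toEuclideanCLM (𝕜 := ℝ) M‖₊ : ℝ≥0∞) *
      (‖Matrix.toEuclideanCLM (𝕜 := ℝ) M‖₊ : ℝ≥0∞) := by
  have h1 : cmap (Mᵀ * M) = (cmap M)ᴴ * cmap M := by rw [cmap_mul, cmap_conjTranspose]
  have hsa : IsSelfAdjoint ((cmap M)ᴴ * cmap M) := by
    simpa [Matrix.star_eq_conjTranspose] using IsSelfAdjoint.star_mul_self (cmap M)
  rw [specRad_eq, h1, hsa.spectralRadius_eq_nnnorm,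
    Matrix.l2_opNNNorm_conjTranspose_mul_self, nnnorm_cmap_eq, ENNReal.coe_mul]


lemma mul_entry_nonneg {M N : Matrix (Fin n) (Fin n) ℝ} (hM : ∀ i j, 0 ≤ M i j)
    (hN : ∀ i j, 0 ≤ N i j) : ∀ i j, 0 ≤ (M * N) i j := by
  intro i j
  rw [Matrix.mul_apply]
  exact Finset.sum_nonneg fun k _ => mul_nonneg (hM i k) (hN k j)

lemma ennreal_sq_le_imp {x y : ℝ≥0∞} (h : x * x ≤ y) : x ≤ y ^ ((1:ℝ)/2) := by
  have hx : x = (x * x) ^ ((1:ℝ)/2) := by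
    rw [← pow_two, ← ENNReal.rpow_natCast x 2, ← ENNReal.rpow_mul]
    norm_num
  rw [hx]
  exact ENNReal.rpow_le_rpow h (by norm_num)

end Stmt19Aux

theorem stmt19 {n : ℕ} (A B : Matrix (Fin n) (Fin n) ℝ)
    (hA : ∀ i j, 0 ≤ A i j) (hB : ∀ i j, 0 ≤ B i j) :
    (‖Matrix.toEuclideanCLM (𝕜 := ℝ)
        (Matrix.of fun i j => (A i j) ^ ((1:ℝ)/3) * (Bᵀ i j) ^ ((1:ℝ)/3) * (A i j) ^ ((1:ℝ)/3))‖₊ : ℝ≥0∞) ≤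
        (specRad (Matrix.of fun i j =>
          ((Aᵀ * Bᵀ) i j) ^ ((1:ℝ)/3) * ((Aᵀ * A) i j) ^ ((1:ℝ)/3) * ((B * A) i j) ^ ((1:ℝ)/3))) ^ ((1:ℝ)/2) ∧
      (specRad (Matrix.of fun i j =>
          ((Aᵀ * Bᵀ) i j) ^ ((1:ℝ)/3) * ((Aᵀ * A) i j) ^ ((1:ℝ)/3) * ((B * A) i j) ^ ((1:ℝ)/3))) ^ ((1:ℝ)/2) ≤
        (‖Matrix.toEuclideanCLM (𝕜 := ℝ) (A * B * A)‖₊ : ℝ≥0∞) ^ ((1:ℝ)/3) := by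
  classical
  open Stmt19Aux in
  set X := Aᵀ * Bᵀ with hXdef
  set Y := Aᵀ * A with hYdef
  set Z := B * A with hZdef
  have hAT : ∀ i j, 0 ≤ Aᵀ i j := fun i j => hA j i
  have hBT : ∀ i j, 0 ≤ Bᵀ i j := fun i j => hB j i
  have hX : ∀ i j, 0 ≤ X i j := mul_entry_nonneg hAT hBT
  have hY : ∀ i j, 0 ≤ Y i j := mul_entry_nonneg hAT hA
  have hZ : ∀ i j, 0 ≤ Z i j := mul_entry_nonneg hB hA
  have hD0 : (Matrix.of fun i j =>
      (X i j) ^ ((1:ℝ)/3) * (Y i j) ^ ((1:ℝ)/3) * (Z i j) ^ ((1:ℝ)/3)) = hroot X Y Z := rfl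
  rw [hD0]
  set C : Matrix (Fin n) (Fin n) ℝ :=
    Matrix.of fun i j => (A i j) ^ ((1:ℝ)/3) * (Bᵀ i j) ^ ((1:ℝ)/3) * (A i j) ^ ((1:ℝ)/3)
    with hCdef
  set ρ := specRad (hroot X Y Z) with hρ
  constructor
  · -- first inequality
    have hCTC : ∀ i j, (Cᵀ * C) i j = ∑ k,
        (A k i * B j k) ^ ((1:ℝ)/3) * (A k i * A k j) ^ ((1:ℝ)/3) *
          (B i k * A k j) ^ ((1:ℝ)/3) := by
      intro i j
      rw [Matrix.mul_apply]
      refine Finset.sum_congr rfl fun k _ => ?_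
      rw [Matrix.transpose_apply]
      show (A k i) ^ ((1:ℝ)/3) * (Bᵀ k i) ^ ((1:ℝ)/3) * (A k i) ^ ((1:ℝ)/3) *
        ((A k j) ^ ((1:ℝ)/3) * (Bᵀ k j) ^ ((1:ℝ)/3) * (A k j) ^ ((1:ℝ)/3)) = _
      rw [Matrix.transpose_apply, Matrix.transpose_apply,
        Real.mul_rpow (hA k i) (hB j k), Real.mul_rpow (hA k i) (hA k j),
        Real.mul_rpow (hB i k) (hA k j)]
      ring
    have h1 : ∀ i j, |(Cᵀ * C) i j| ≤ hroot X Y Z i j := by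
      intro i j
      rw [hCTC i j, abs_of_nonneg (Finset.sum_nonneg fun k _ =>
        mul_nonneg (mul_nonneg (Real.rpow_nonneg (mul_nonneg (hA k i) (hB j k)) _)
          (Real.rpow_nonneg (mul_nonneg (hA k i) (hA k j)) _))
          (Real.rpow_nonneg (mul_nonneg (hB i k) (hA k j)) _))]
      have hold := holder3 Finset.univ (fun k => A k i * B j k) (fun k => A k i * A k j)
        (fun k => B i k * A k j)
        (fun k _ => mul_nonneg (hA k i) (hB j k))
        (fun k _ => mul_nonneg (hA k i) (hA k j))
        (fun k _ => mul_nonneg (hB i k) (hA k j))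
      have hXij : X i j = ∑ k, A k i * B j k := by
        rw [hXdef, Matrix.mul_apply]
        exact Finset.sum_congr rfl fun k _ => by rw [Matrix.transpose_apply, Matrix.transpose_apply]
      have hYij : Y i j = ∑ k, A k i * A k j := by
        rw [hYdef, Matrix.mul_apply]
        exact Finset.sum_congr rfl fun k _ => by rw [Matrix.transpose_apply]
      have hZij : Z i j = ∑ k, B i k * A k j := by
        rw [hZdef, Matrix.mul_apply]
      rw [hroot_apply, hXij, hYij, hZij]
      exact hold
    have hmono : specRad (Cᵀ * C) ≤ ρ := specRad_mono h1
    rw [specRad_transpose_mul_self C] at hmono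
    exact ennreal_sq_le_imp hmono
  · -- second inequality
    set D := hroot X Y Z with hD
    have hDnn : ∀ i j, 0 ≤ D i j := hroot_nonneg hX hY hZ
    have hD3 : ∀ i j, (D ^ 3) i j = ∑ p ∈ (Finset.univ ×ˢ Finset.univ : Finset (Fin n × Fin n)),
        D i p.2 * D p.2 p.1 * D p.1 j := by
      intro i j
      rw [pow_succ, pow_two, Matrix.mul_apply, Finset.sum_product]
      refine Finset.sum_congr rfl fun l _ => ?_
      rw [Matrix.mul_apply, Finset.sum_mul]
    have h2 : ∀ i j, |(D ^ 3) i j| ≤ hroot (X * Y * Z) (Y * Z * X) (Z * X * Y) i j := by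
      intro i j
      have hnn3 : 0 ≤ (D ^ 3) i j := pow_entry_nonneg hDnn 3 i j
      rw [abs_of_nonneg hnn3, hD3 i j]
      have hterm : ∀ p : Fin n × Fin n, D i p.2 * D p.2 p.1 * D p.1 j =
          (X i p.2 * Y p.2 p.1 * Z p.1 j) ^ ((1:ℝ)/3) *
          (Y i p.2 * Z p.2 p.1 * X p.1 j) ^ ((1:ℝ)/3) *
          (Z i p.2 * X p.2 p.1 * Y p.1 j) ^ ((1:ℝ)/3) := by
        rintro ⟨l, k⟩
        simp only [hD, hroot_apply]
        rw [Real.mul_rpow (mul_nonneg (hX i k) (hY k l)) (hZ l j),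
          Real.mul_rpow (hX i k) (hY k l),
          Real.mul_rpow (mul_nonneg (hY i k) (hZ k l)) (hX l j),
          Real.mul_rpow (hY i k) (hZ k l),
          Real.mul_rpow (mul_nonneg (hZ i k) (hX k l)) (hY l j),
          Real.mul_rpow (hZ i k) (hX k l)]
        ring
      rw [Finset.sum_congr rfl fun p _ => hterm p]
      have hold := holder3 (Finset.univ ×ˢ Finset.univ : Finset (Fin n × Fin n))
        (fun p => X i p.2 * Y p.2 p.1 * Z p.1 j)
        (fun p => Y i p.2 * Z p.2 p.1 * X p.1 j)
        (fun p => Z i p.2 * X p.2 p.1 * Y p.1 j)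
        (fun p _ => mul_nonneg (mul_nonneg (hX i p.2) (hY p.2 p.1)) (hZ p.1 j))
        (fun p _ => mul_nonneg (mul_nonneg (hY i p.2) (hZ p.2 p.1)) (hX p.1 j))
        (fun p _ => mul_nonneg (mul_nonneg (hZ i p.2) (hX p.2 p.1)) (hY p.1 j))
      have hXYZ : (X * Y * Z) i j = ∑ p ∈ (Finset.univ ×ˢ Finset.univ : Finset (Fin n × Fin n)),
          X i p.2 * Y p.2 p.1 * Z p.1 j := by
        rw [Matrix.mul_apply, Finset.sum_product]
        refine Finset.sum_congr rfl fun l _ => ?_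
        rw [Matrix.mul_apply, Finset.sum_mul]
      have hYZX : (Y * Z * X) i j = ∑ p ∈ (Finset.univ ×ˢ Finset.univ : Finset (Fin n × Fin n)),
          Y i p.2 * Z p.2 p.1 * X p.1 j := by
        rw [Matrix.mul_apply, Finset.sum_product]
        refine Finset.sum_congr rfl fun l _ => ?_
        rw [Matrix.mul_apply, Finset.sum_mul]
      have hZXY : (Z * X * Y) i j = ∑ p ∈ (Finset.univ ×ˢ Finset.univ : Finset (Fin n × Fin n)),
          Z i p.2 * X p.2 p.1 * Y p.1 j := by
        rw [Matrix.mul_apply, Finset.sum_product]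
        refine Finset.sum_congr rfl fun l _ => ?_
        rw [Matrix.mul_apply, Finset.sum_mul]
      rw [hroot_apply, hXYZ, hYZX, hZXY]
      exact hold
    have hcube : specRad (D ^ 3) = ρ ^ 3 := specRad_pow D (by norm_num)
    have hmono2 : specRad (D ^ 3) ≤ specRad (hroot (X * Y * Z) (Y * Z * X) (Z * X * Y)) :=
      specRad_mono h2
    have hXYZnn : ∀ i j, 0 ≤ (X * Y * Z) i j :=
      mul_entry_nonneg (mul_entry_nonneg hX hY) hZ
    have hYZXnn : ∀ i j, 0 ≤ (Y * Z * X) i j :=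
      mul_entry_nonneg (mul_entry_nonneg hY hZ) hX
    have hZXYnn : ∀ i j, 0 ≤ (Z * X * Y) i j :=
      mul_entry_nonneg (mul_entry_nonneg hZ hX) hY
    have hEJ := specRad_hroot_le hXYZnn hYZXnn hZXYnn
    have hc1 : specRad (Y * Z * X) = specRad (X * Y * Z) := by
      rw [show Y * Z * X = (Y * Z) * X from rfl, specRad_mul_comm (Y * Z) X, ← Matrix.mul_assoc]
    have hc2 : specRad (Z * X * Y) = specRad (X * Y * Z) := by
      rw [show Z * X * Y = Z * (X * Y) from Matrix.mul_assoc Z X Y, specRad_mul_comm Z (X * Y)]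
    rw [hc1, hc2] at hEJ
    set S := specRad (X * Y * Z) with hS
    have hScollapse : S ^ ((1:ℝ)/3) * S ^ ((1:ℝ)/3) * S ^ ((1:ℝ)/3) = S := by
      have : S ^ ((1:ℝ)/3) * S ^ ((1:ℝ)/3) * S ^ ((1:ℝ)/3) = (S ^ ((1:ℝ)/3)) ^ (3:ℕ) := by ring
      rw [this, ← ENNReal.rpow_natCast (S ^ ((1:ℝ)/3)) 3, ← ENNReal.rpow_mul]
      norm_num
    rw [hScollapse] at hEJ
    have hSval : S = (‖Matrix.toEuclideanCLM (𝕜 := ℝ) (A * B * A)‖₊ : ℝ≥0∞) *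
        (‖Matrix.toEuclideanCLM (𝕜 := ℝ) (A * B * A)‖₊ : ℝ≥0∞) := by
      rw [hS, show X * Y * Z = (A * B * A)ᵀ * (A * B * A) by
        rw [hXdef, hYdef, hZdef]
        simp only [Matrix.transpose_mul, Matrix.mul_assoc]]
      exact specRad_transpose_mul_self (A * B * A)
    set N : ℝ≥0∞ := (‖Matrix.toEuclideanCLM (𝕜 := ℝ) (A * B * A)‖₊ : ℝ≥0∞) with hN
    have hfinal : ρ ^ 3 ≤ N * N := by
      calc ρ ^ 3 = specRad (D ^ 3) := hcube.symm
        _ ≤ S := hmono2.trans hEJ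
        _ = N * N := hSval
    -- conclude ρ ^ (1/2) ≤ N ^ (1/3)
    have hρle : ρ ≤ (N * N) ^ ((1:ℝ)/3) := by
      have h3 : ρ = (ρ ^ (3:ℕ)) ^ ((1:ℝ)/3) := by
        rw [← ENNReal.rpow_natCast ρ 3, ← ENNReal.rpow_mul]
        norm_num
      rw [h3]
      exact ENNReal.rpow_le_rpow hfinal (by norm_num)
    calc ρ ^ ((1:ℝ)/2) ≤ ((N * N) ^ ((1:ℝ)/3)) ^ ((1:ℝ)/2) :=
          ENNReal.rpow_le_rpow hρle (by norm_num)
      _ = N ^ ((1:ℝ)/3) := by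
          rw [← pow_two, ← ENNReal.rpow_natCast N 2, ← ENNReal.rpow_mul, ← ENNReal.rpow_mul]
          norm_num
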